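/- Let T' ⊆ T be an inclusion of triangulated subcategories, and let T = ⟨T_1, T_2⟩ be a semi-orthogonal decomposition of T with right adjoints R_i: T → T_i to the inclusions. If for each i the restriction of R_i to T' factors through T_i ∩ T', then T' = ⟨T' ∩ T_1, T' ∩ T_2⟩ is a semi-orthogonal decomposition of T'. -/

import Mathlib

open CategoryTheory Limits Pretriangulated

variable {C : Type*} [Category C] [Preadditive C] [HasZeroObject C] [HasShift C ℤ]
  [∀ n : ℤ, (shiftFunctor C n).Additive] [Pretriangulated C]

/-- A set of objects `P` of a pretriangulated category is *triangulated-closed* if it is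
closed under isomorphisms, shifts and cones of distinguished triangles, so it underlies a
strictly full triangulated subcategory. -/
def IsTriangClosed (P : Set C) : Prop :=
  (∀ X Y : C, (X ≅ Y) → X ∈ P → Y ∈ P) ∧
  (∀ (X : C) (n : ℤ), X ∈ P → (X⟦n⟧ ∈ P)) ∧
  (∀ T ∈ distTriang C, T.obj₁ ∈ P → T.obj₂ ∈ P → T.obj₃ ∈ P)

/-- Let `T' ⊆ T` be a triangulated subcategory and `T = ⟨T₁, T₂⟩` a
semi-orthogonal decomposition, with right adjoints `R₁, R₂` to the inclusions of the
(triangulated, right-admissible) pieces; every `X` sits in a distinguished triangle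
`X₂ → X → X₁ → X₂⟦1⟧` with `Xᵢ ∈ Tᵢ` and `Hom(b, a) = 0` for `a ∈ T₁`, `b ∈ T₂`.
If each `Rᵢ` restricted to `T'` factors through `Tᵢ ∩ T'`, then
`T' = ⟨T' ∩ T₁, T' ∩ T₂⟩` is a semi-orthogonal decomposition of `T'`: the semi-orthogonality
is inherited and every `X ∈ T'` sits in a distinguished triangle `X₂ → X → X₁ → X₂⟦1⟧`
with `X₁ ∈ T₁ ∩ T'` and `X₂ ∈ T₂ ∩ T'`. -/
theorem sod_restricts_to_triangulated_subcategory
    (T₁ T₂ T' : Set C)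
    (hT' : IsTriangClosed T') (hT₁ : IsTriangClosed T₁) (hT₂ : IsTriangClosed T₂)
    (R₁ : C ⥤ ObjectProperty.FullSubcategory (· ∈ T₁)) (R₂ : C ⥤ ObjectProperty.FullSubcategory (· ∈ T₂))
    (adj₁ : ObjectProperty.ι (· ∈ T₁) ⊣ R₁)
    (adj₂ : ObjectProperty.ι (· ∈ T₂) ⊣ R₂)
    (hsemiorth : ∀ a ∈ T₁, ∀ b ∈ T₂, ∀ φ : b ⟶ a, φ = 0)
    (hdecomp : ∀ X : C,
      ∃ (X₁ X₂ : C) (_ : X₁ ∈ T₁) (_ : X₂ ∈ T₂) (f : X₂ ⟶ X) (g : X ⟶ X₁)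
        (h : X₁ ⟶ X₂⟦(1 : ℤ)⟧), Triangle.mk f g h ∈ distTriang C)
    (hfactor : ∀ X ∈ T', (R₁.obj X).obj ∈ T' ∧ (R₂.obj X).obj ∈ T') :
    (∀ a ∈ T₁ ∩ T', ∀ b ∈ T₂ ∩ T', ∀ φ : b ⟶ a, φ = 0) ∧
      ∀ X ∈ T',
        ∃ (X₁ X₂ : C) (_ : X₁ ∈ T₁ ∩ T') (_ : X₂ ∈ T₂ ∩ T') (f : X₂ ⟶ X) (g : X ⟶ X₁)
          (h : X₁ ⟶ X₂⟦(1 : ℤ)⟧), Triangle.mk f g h ∈ distTriang C := by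
  constructor
  · intro a ha b hb φ
    exact hsemiorth a ha.1 b hb.1 φ
  · intro X hX
    obtain ⟨X₁, X₂, hX₁, hX₂, f, g, h, hdist⟩ := hdecomp X
    -- The counit ε : (R₂ X).obj ⟶ X
    set ε : (R₂.obj X).obj ⟶ X := adj₂.counit.app X with hε
    -- ε ≫ g = 0 by semiorthogonality
    have hεg : ε ≫ g = 0 := hsemiorth X₁ hX₁ (R₂.obj X).obj (R₂.obj X).property (ε ≫ g)
    obtain ⟨k, hk⟩ : ∃ k : (R₂.obj X).obj ⟶ X₂, ε = k ≫ f :=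
      Triangle.coyoneda_exact₂ _ hdist ε hεg
    -- f corresponds under the adjunction to a morphism f₂ : X₂ ⟶ (R₂ X).obj
    obtain ⟨f₂, hf₂⟩ : ∃ f₂ : X₂ ⟶ (R₂.obj X).obj, f₂ ≫ ε = f := by
      refine ⟨(adj₂.homEquiv ⟨X₂, hX₂⟩ X f).hom, ?_⟩
      have h1 := (adj₂.homEquiv ⟨X₂, hX₂⟩ X).symm_apply_apply f
      rw [Adjunction.homEquiv_counit] at h1
      exact h1
    -- composition with ε is injective on morphisms (R₂ X).obj ⟶ (R₂ X).obj
    have hinj : ∀ u v : (R₂.obj X).obj ⟶ (R₂.obj X).obj, u ≫ ε = v ≫ ε → u = v := by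
      intro u v huv
      exact congrArg InducedCategory.Hom.hom <| (adj₂.homEquiv (R₂.obj X) X).symm.injective (a₁ := ObjectProperty.homMk u) (a₂ := ObjectProperty.homMk v)
        (by rw [Adjunction.homEquiv_counit, Adjunction.homEquiv_counit]; exact huv)
    -- injectivity of composition with f on morphisms from objects of T₂
    have hinjf : ∀ (B : C) (_ : B ∈ T₂) (w : B ⟶ X₂), w ≫ f = 0 → w = 0 := by
      intro B hB w hw
      obtain ⟨v, hv⟩ : ∃ v : B ⟶ X₁⟦(-1 : ℤ)⟧, w = v ≫ (Triangle.mk f g h).invRotate.mor₁ :=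
        Triangle.coyoneda_exact₂ _ (inv_rot_of_distTriang _ hdist) w hw
      have hv0 : v = 0 := hsemiorth (X₁⟦(-1 : ℤ)⟧) (hT₁.2.1 X₁ (-1) hX₁) B hB v
      rw [hv, hv0]; exact zero_comp
    -- k and f₂ are mutually inverse
    have hkf₂ : k ≫ f₂ = 𝟙 _ := by
      apply hinj
      rw [Category.assoc, hf₂, Category.id_comp, ← hk]
    have hf₂k : f₂ ≫ k = 𝟙 X₂ := by
      have h0 : (f₂ ≫ k - 𝟙 X₂) ≫ f = 0 := by
        rw [Preadditive.sub_comp, Category.assoc, ← hk, hf₂, Category.id_comp, sub_self]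
      have := hinjf X₂ hX₂ _ h0
      rwa [sub_eq_zero] at this
    -- hence X₂ ≅ (R₂ X).obj, so X₂ ∈ T'
    have hX₂T' : X₂ ∈ T' :=
      hT'.1 (R₂.obj X).obj X₂ ⟨k, f₂, hkf₂, hf₂k⟩ ((hfactor X hX).2)
    -- X₁ ∈ T' as the cone of the distinguished triangle X₂ ⟶ X ⟶ X₁
    have hX₁T' : X₁ ∈ T' := hT'.2.2 _ hdist hX₂T' hX
    exact ⟨X₁, X₂, ⟨hX₁, hX₁T'⟩, ⟨hX₂, hX₂T'⟩, f, g, h, hdist⟩
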